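/- Let (Ω, 𝓕, P) be a probability space, B > 0, and X, Y : Ω → ℝ measurable with |X| ≤ B and |Y| ≤ B almost surely. Suppose A ∈ 𝓕 is an event with P(Aᶜ) ≤ δ for some δ ∈ [0,1], and there are constants x̂, ŷ ∈ ℝ with |x̂| ≤ B, |ŷ| ≤ B such that X = x̂ a.s. on A and Y = ŷ a.s. on A. Then |Cov(X,Y)| ≤ 8·B²·δ. (This quantifies the paper's conclusion in Lemma 3 that the covariance between the true latent locations is O(δ(n)) when the probability of any estimation error is at most δ(n).) -/

import Mathlib

open MeasureTheory

lemma aux_abs_integral_le {Ω : Type*} {m : MeasurableSpace Ω} (P : Measure Ω)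
    [IsProbabilityMeasure P]
    (f : Ω → ℝ) (hf : Integrable f P) (C : ℝ) (hC : 0 ≤ C)
    (A : Set Ω) (hA : MeasurableSet A)
    (h0 : ∀ᵐ ω ∂P, ω ∈ A → f ω = 0)
    (hb : ∀ᵐ ω ∂P, |f ω| ≤ C) :
    |∫ ω, f ω ∂P| ≤ C * (P Aᶜ).toReal := by
  have h1 : |∫ ω, f ω ∂P| ≤ ∫ ω, |f ω| ∂P := by simpa [Real.norm_eq_abs] using norm_integral_le_integral_norm f
  have h2 : ∫ ω, |f ω| ∂P ≤ ∫ ω, Aᶜ.indicator (fun _ => C) ω ∂P := by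
    apply integral_mono_ae hf.abs ((integrable_const C).indicator hA.compl)
    filter_upwards [h0, hb] with ω h0 hb
    by_cases h : ω ∈ A
    · simp [Set.indicator, h, h0 h]
    · simp [Set.indicator, h, hb]
  rw [integral_indicator_const _ hA.compl, smul_eq_mul, mul_comm, Measure.real] at h2
  linarith

/-- If `|X|, |Y| ≤ B` a.s., `P(Aᶜ) ≤ δ`, and `X = x̂`, `Y = ŷ` a.s. on `A` for constants
with `|x̂|, |ŷ| ≤ B`, then `|Cov(X,Y)| ≤ 8·B²·δ`. -/
theorem abs_cov_le_of_constant_on_good_event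
    {Ω : Type*} {𝓕 : MeasurableSpace Ω} (P : Measure Ω) [IsProbabilityMeasure P]
    (B : ℝ) (hB : 0 < B)
    (X Y : Ω → ℝ) (hX : Measurable X) (hY : Measurable Y)
    (hXb : ∀ᵐ ω ∂P, |X ω| ≤ B) (hYb : ∀ᵐ ω ∂P, |Y ω| ≤ B)
    (A : Set Ω) (hA : MeasurableSet A)
    (δ : ℝ) (hδ0 : 0 ≤ δ) (hδ1 : δ ≤ 1) (hPA : (P Aᶜ).toReal ≤ δ)
    (xhat yhat : ℝ) (hxhat : |xhat| ≤ B) (hyhat : |yhat| ≤ B)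
    (hXA : ∀ᵐ ω ∂P, ω ∈ A → X ω = xhat)
    (hYA : ∀ᵐ ω ∂P, ω ∈ A → Y ω = yhat) :
    |(∫ ω, X ω * Y ω ∂P) - (∫ ω, X ω ∂P) * (∫ ω, Y ω ∂P)| ≤ 8 * B ^ 2 * δ := by
  have hXint : Integrable X P := by
    refine (integrable_const B).mono' hX.aestronglyMeasurable ?_
    filter_upwards [hXb] with ω h; simpa [Real.norm_eq_abs] using h
  have hYint : Integrable Y P := by
    refine (integrable_const B).mono' hY.aestronglyMeasurable ?_
    filter_upwards [hYb] with ω h; simpa [Real.norm_eq_abs] using h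
  have hXYint : Integrable (fun ω => X ω * Y ω) P := by
    refine (integrable_const (B * B)).mono' (hX.mul hY).aestronglyMeasurable ?_
    filter_upwards [hXb, hYb] with ω h1 h2
    rw [Real.norm_eq_abs, abs_mul]
    exact mul_le_mul h1 h2 (abs_nonneg _) hB.le
  set EX := ∫ ω, X ω ∂P
  set EY := ∫ ω, Y ω ∂P
  set EXY := ∫ ω, X ω * Y ω ∂P
  set d := (P Aᶜ).toReal with hd
  have hd0 : 0 ≤ d := ENNReal.toReal_nonneg
  -- |EXY - x̂ŷ| ≤ 2B² d
  have h1 : |EXY - xhat * yhat| ≤ 2 * B ^ 2 * d := by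
    have := aux_abs_integral_le P (fun ω => X ω * Y ω - xhat * yhat)
      (hXYint.sub (integrable_const _)) (2 * B ^ 2) (by positivity) A hA
      (by filter_upwards [hXA, hYA] with ω hx hy hm; rw [hx hm, hy hm]; ring)
      (by filter_upwards [hXb, hYb] with ω h1 h2
          have : |X ω * Y ω - xhat * yhat| ≤ |X ω * Y ω| + |xhat * yhat| := abs_sub _ _
          rw [abs_mul, abs_mul] at this
          nlinarith [abs_nonneg (X ω), abs_nonneg yhat])
    rwa [integral_sub hXYint (integrable_const _), integral_const, Measure.real, measure_univ,
      ENNReal.toReal_one, one_smul] at this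
  have h2 : |EX - xhat| ≤ 2 * B * d := by
    have := aux_abs_integral_le P (fun ω => X ω - xhat)
      (hXint.sub (integrable_const _)) (2 * B) (by positivity) A hA
      (by filter_upwards [hXA] with ω hx hm; rw [hx hm]; ring)
      (by filter_upwards [hXb] with ω h1
          calc |X ω - xhat| ≤ |X ω| + |xhat| := abs_sub _ _
          _ ≤ 2 * B := by linarith)
    rwa [integral_sub hXint (integrable_const _), integral_const, Measure.real, measure_univ,
      ENNReal.toReal_one, one_smul] at this
  have h3 : |EY - yhat| ≤ 2 * B * d := by
    have := aux_abs_integral_le P (fun ω => Y ω - yhat)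
      (hYint.sub (integrable_const _)) (2 * B) (by positivity) A hA
      (by filter_upwards [hYA] with ω hy hm; rw [hy hm]; ring)
      (by filter_upwards [hYb] with ω h1
          calc |Y ω - yhat| ≤ |Y ω| + |yhat| := abs_sub _ _
          _ ≤ 2 * B := by linarith)
    rwa [integral_sub hYint (integrable_const _), integral_const, Measure.real, measure_univ,
      ENNReal.toReal_one, one_smul] at this
  have hEY : |EY| ≤ B := by
    have : |EY| ≤ ∫ ω, |Y ω| ∂P := by simpa [Real.norm_eq_abs] using norm_integral_le_integral_norm (μ := P) Y
    have h2 : ∫ ω, |Y ω| ∂P ≤ ∫ _ω, B ∂P := integral_mono_ae hYint.abs (integrable_const B) hYb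
    simp only [integral_const, Measure.real, measure_univ, ENNReal.toReal_one, one_smul] at h2
    exact this.trans h2
  have key : |EXY - EX * EY| ≤ |EXY - xhat * yhat| + |xhat| * |yhat - EY| + |EY| * |xhat - EX| := by
    have : EXY - EX * EY = (EXY - xhat * yhat) + xhat * (yhat - EY) + EY * (xhat - EX) := by ring
    rw [this]
    calc _ ≤ |(EXY - xhat * yhat) + xhat * (yhat - EY)| + |EY * (xhat - EX)| := abs_add_le _ _
    _ ≤ |EXY - xhat * yhat| + |xhat * (yhat - EY)| + |EY * (xhat - EX)| := by
        gcongr; exact abs_add_le _ _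
    _ = _ := by rw [abs_mul, abs_mul]
  rw [abs_sub_comm yhat EY, abs_sub_comm xhat EX] at key
  have hdδ : d ≤ δ := hPA
  have hB2 : (0:ℝ) ≤ B ^ 2 := sq_nonneg B
  nlinarith [abs_nonneg EY, abs_nonneg xhat, mul_le_mul hxhat h3 (abs_nonneg _) hB.le,
    mul_le_mul hEY h2 (abs_nonneg _) hB.le]
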